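/- (Lemma 4, feature part: intra-block permutation equivariance of the bilevel attention feature update.) In the bilevel attention setup, define h'ᵢ(p) = hᵢ(p) + ∑_{j∈J} β_j • φ_m(∑_q α_j[p,q] • (W_Vᵀ h_j(q))). Let τᵢ be a permutation of Fin nᵢ and, for each j ∈ J, let τ_j be a permutation of Fin n_j. Then the feature update computed from the permuted inputs hᵢ ∘ τᵢ, xᵢ ∘ τᵢ and h_j ∘ τ_j, x_j ∘ τ_j (for all j ∈ J, with the same e_j) equals h'ᵢ ∘ τᵢ. -/
import Mathlib


open scoped BigOperators RealInnerProductSpace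

/-- Atom-level correlation between block `i` and a neighbor block `j`:
`R[p,q] = (1/√d_r) ⟨W_Qᵀ hᵢ(p), W_Kᵀ h_j(q)⟩ + σ_D(‖xᵢ(p) − x_j(q)‖)`. -/
noncomputable def Rcorr {d dr ni nj : ℕ}
    (WQ WK : Matrix (Fin d) (Fin dr) ℝ) (σD : ℝ → ℝ)
    (hi : Fin ni → EuclideanSpace ℝ (Fin d)) (xi : Fin ni → EuclideanSpace ℝ (Fin 3))
    (hj : Fin nj → EuclideanSpace ℝ (Fin d)) (xj : Fin nj → EuclideanSpace ℝ (Fin 3))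
    (p : Fin ni) (q : Fin nj) : ℝ :=
  (1 / Real.sqrt dr) *
      ⟪Matrix.toEuclideanLin WQ.transpose (hi p),
        Matrix.toEuclideanLin WK.transpose (hj q)⟫
    + σD ‖xi p - xj q‖

/-- Atom-level cross attention `α[p,q] = exp(R[p,q]) / ∑_{q'} exp(R[p,q'])`. -/
noncomputable def alphaAtt {d dr ni nj : ℕ}
    (WQ WK : Matrix (Fin d) (Fin dr) ℝ) (σD : ℝ → ℝ)
    (hi : Fin ni → EuclideanSpace ℝ (Fin d)) (xi : Fin ni → EuclideanSpace ℝ (Fin 3))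
    (hj : Fin nj → EuclideanSpace ℝ (Fin d)) (xj : Fin nj → EuclideanSpace ℝ (Fin 3))
    (p : Fin ni) (q : Fin nj) : ℝ :=
  Real.exp (Rcorr WQ WK σD hi xi hj xj p q) /
    ∑ q' : Fin nj, Real.exp (Rcorr WQ WK σD hi xi hj xj p q')

/-- Block-level correlation `r_j = (1/(nᵢ n_j)) ∑_{p,q} R_j[p,q] + e_j`. -/
noncomputable def rBlock {d dr ni nj : ℕ}
    (WQ WK : Matrix (Fin d) (Fin dr) ℝ) (σD : ℝ → ℝ)
    (hi : Fin ni → EuclideanSpace ℝ (Fin d)) (xi : Fin ni → EuclideanSpace ℝ (Fin 3))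
    (hj : Fin nj → EuclideanSpace ℝ (Fin d)) (xj : Fin nj → EuclideanSpace ℝ (Fin 3))
    (ej : ℝ) : ℝ :=
  (1 / ((ni : ℝ) * (nj : ℝ))) *
      (∑ p : Fin ni, ∑ q : Fin nj, Rcorr WQ WK σD hi xi hj xj p q)
    + ej

/-- Block-level cross attention `β_j = exp(r_j) / ∑_{j'∈J} exp(r_{j'})`. -/
noncomputable def betaAtt {d dr ni : ℕ} {ι : Type*} [Fintype ι]
    (WQ WK : Matrix (Fin d) (Fin dr) ℝ) (σD : ℝ → ℝ)
    (hi : Fin ni → EuclideanSpace ℝ (Fin d)) (xi : Fin ni → EuclideanSpace ℝ (Fin 3))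
    (nb : ι → ℕ)
    (hb : ∀ j, Fin (nb j) → EuclideanSpace ℝ (Fin d))
    (xb : ∀ j, Fin (nb j) → EuclideanSpace ℝ (Fin 3))
    (e : ι → ℝ) (j : ι) : ℝ :=
  Real.exp (rBlock WQ WK σD hi xi (hb j) (xb j) (e j)) /
    ∑ j' : ι, Real.exp (rBlock WQ WK σD hi xi (hb j') (xb j') (e j'))

/-- Coordinate update of the bilevel attention module:
`x'ᵢ(p) = xᵢ(p) + ∑_{j∈J} β_j ∑_q α_j[p,q] · φ_X(R_j[p,q]) • (xᵢ(p) − x_j(q))`. -/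
noncomputable def coordUpdate {d dr ni : ℕ} {ι : Type*} [Fintype ι]
    (WQ WK : Matrix (Fin d) (Fin dr) ℝ) (σD : ℝ → ℝ) (φX : ℝ → ℝ)
    (hi : Fin ni → EuclideanSpace ℝ (Fin d)) (xi : Fin ni → EuclideanSpace ℝ (Fin 3))
    (nb : ι → ℕ)
    (hb : ∀ j, Fin (nb j) → EuclideanSpace ℝ (Fin d))
    (xb : ∀ j, Fin (nb j) → EuclideanSpace ℝ (Fin 3))
    (e : ι → ℝ) (p : Fin ni) : EuclideanSpace ℝ (Fin 3) :=
  xi p + ∑ j : ι, betaAtt WQ WK σD hi xi nb hb xb e j •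
    ∑ q : Fin (nb j),
      (alphaAtt WQ WK σD hi xi (hb j) (xb j) p q *
        φX (Rcorr WQ WK σD hi xi (hb j) (xb j) p q)) • (xi p - xb j q)

/-- Feature update of the bilevel attention module:
`h'ᵢ(p) = hᵢ(p) + ∑_{j∈J} β_j • φ_m(∑_q α_j[p,q] • (W_Vᵀ h_j(q)))`. -/
noncomputable def featUpdate {d dr dv ni : ℕ} {ι : Type*} [Fintype ι]
    (WQ WK : Matrix (Fin d) (Fin dr) ℝ) (WV : Matrix (Fin d) (Fin dv) ℝ)
    (σD : ℝ → ℝ) (φm : EuclideanSpace ℝ (Fin dv) → EuclideanSpace ℝ (Fin d))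
    (hi : Fin ni → EuclideanSpace ℝ (Fin d)) (xi : Fin ni → EuclideanSpace ℝ (Fin 3))
    (nb : ι → ℕ)
    (hb : ∀ j, Fin (nb j) → EuclideanSpace ℝ (Fin d))
    (xb : ∀ j, Fin (nb j) → EuclideanSpace ℝ (Fin 3))
    (e : ι → ℝ) (p : Fin ni) : EuclideanSpace ℝ (Fin d) :=
  hi p + ∑ j : ι, betaAtt WQ WK σD hi xi nb hb xb e j •
    φm (∑ q : Fin (nb j),
      alphaAtt WQ WK σD hi xi (hb j) (xb j) p q •
        Matrix.toEuclideanLin WV.transpose (hb j q))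

theorem featUpdate_perm_equivariant {d dr dv ni : ℕ} {ι : Type*} [Fintype ι] [Nonempty ι]
    (hni : 1 ≤ ni) (nb : ι → ℕ) (hnb : ∀ j, 1 ≤ nb j)
    (WQ WK : Matrix (Fin d) (Fin dr) ℝ) (WV : Matrix (Fin d) (Fin dv) ℝ)
    (σD : ℝ → ℝ) (φm : EuclideanSpace ℝ (Fin dv) → EuclideanSpace ℝ (Fin d))
    (hi : Fin ni → EuclideanSpace ℝ (Fin d)) (xi : Fin ni → EuclideanSpace ℝ (Fin 3))
    (hb : ∀ j, Fin (nb j) → EuclideanSpace ℝ (Fin d))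
    (xb : ∀ j, Fin (nb j) → EuclideanSpace ℝ (Fin 3))
    (e : ι → ℝ)
    (τi : Equiv.Perm (Fin ni)) (τb : ∀ j : ι, Equiv.Perm (Fin (nb j))) :
    featUpdate WQ WK WV σD φm (hi ∘ τi) (xi ∘ τi)
        nb (fun j => hb j ∘ τb j) (fun j => xb j ∘ τb j) e
      = (featUpdate WQ WK WV σD φm hi xi nb hb xb e) ∘ τi := by
  funext p
  have hR : ∀ (j : ι) (q : Fin (nb j)),
      Rcorr WQ WK σD (hi ∘ τi) (xi ∘ τi) (hb j ∘ τb j) (xb j ∘ τb j) p q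
        = Rcorr WQ WK σD hi xi (hb j) (xb j) (τi p) (τb j q) := fun j q => rfl
  have hα : ∀ (j : ι) (q : Fin (nb j)),
      alphaAtt WQ WK σD (hi ∘ τi) (xi ∘ τi) (hb j ∘ τb j) (xb j ∘ τb j) p q
        = alphaAtt WQ WK σD hi xi (hb j) (xb j) (τi p) (τb j q) := by
    intro j q
    unfold alphaAtt
    have hden : (∑ q' : Fin (nb j),
          Real.exp (Rcorr WQ WK σD (hi ∘ τi) (xi ∘ τi) (hb j ∘ τb j) (xb j ∘ τb j) p q'))
        = ∑ q' : Fin (nb j),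
          Real.exp (Rcorr WQ WK σD hi xi (hb j) (xb j) (τi p) q') :=
      Fintype.sum_equiv (τb j) _ _ (fun q' => by rw [hR j q'])
    rw [hR j q, hden]
  have hr : ∀ j : ι,
      rBlock WQ WK σD (hi ∘ τi) (xi ∘ τi) (hb j ∘ τb j) (xb j ∘ τb j) (e j)
        = rBlock WQ WK σD hi xi (hb j) (xb j) (e j) := by
    intro j
    unfold rBlock
    have hsum : (∑ p' : Fin ni, ∑ q' : Fin (nb j),
          Rcorr WQ WK σD (hi ∘ τi) (xi ∘ τi) (hb j ∘ τb j) (xb j ∘ τb j) p' q')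
        = ∑ p' : Fin ni, ∑ q' : Fin (nb j),
          Rcorr WQ WK σD hi xi (hb j) (xb j) p' q' :=
      Fintype.sum_equiv τi _ _ (fun p' =>
        Fintype.sum_equiv (τb j) _ _ (fun q' => rfl))
    rw [hsum]
  have hβ : ∀ j : ι,
      betaAtt WQ WK σD (hi ∘ τi) (xi ∘ τi) nb (fun j => hb j ∘ τb j)
          (fun j => xb j ∘ τb j) e j
        = betaAtt WQ WK σD hi xi nb hb xb e j := by
    intro j
    unfold betaAtt
    have hden : (∑ j' : ι,
          Real.exp (rBlock WQ WK σD (hi ∘ τi) (xi ∘ τi) (hb j' ∘ τb j') (xb j' ∘ τb j') (e j')))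
        = ∑ j' : ι, Real.exp (rBlock WQ WK σD hi xi (hb j') (xb j') (e j')) :=
      Finset.sum_congr rfl (fun j' _ => by rw [hr j'])
    rw [hr j, hden]
  show _ = featUpdate WQ WK WV σD φm hi xi nb hb xb e (τi p)
  unfold featUpdate
  refine congrArg (fun z => hi (τi p) + z) ?_
  refine Finset.sum_congr rfl (fun j _ => ?_)
  rw [hβ j]
  have hin : (∑ q : Fin (nb j),
        alphaAtt WQ WK σD (hi ∘ τi) (xi ∘ τi) (hb j ∘ τb j) (xb j ∘ τb j) p q •
          Matrix.toEuclideanLin WV.transpose ((hb j ∘ τb j) q))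
      = ∑ q : Fin (nb j),
        alphaAtt WQ WK σD hi xi (hb j) (xb j) (τi p) q •
          Matrix.toEuclideanLin WV.transpose (hb j q) :=
    Fintype.sum_equiv (τb j) _ _ (fun q => by rw [hα j q]; rfl)
  rw [hin]
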